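/- For every x ∈ [0,ℓ] one has W(ℓ,2r) ≤ P(x ∉ [I, S]) ≤ W(ℓ,r); that is, the probability that the random interval [I, S] avoids the point x lies between W(ℓ,2r) and W(ℓ,r). -/

import Mathlib

open MeasureTheory ProbabilityTheory

/-- The uniform probability measure on `[0,ℓ]` (normalized Lebesgue measure). -/
noncomputable def unifMeasure (ℓ : ℝ) : Measure ℝ :=
  ProbabilityTheory.cond volume (Set.Icc 0 ℓ)

/-- `W ℓ r = 1 − (r/(2ℓ))·(1 − e^{−2ℓ/r})`. -/
noncomputable def W (ℓ r : ℝ) : ℝ := 1 - (r / (2 * ℓ)) * (1 - Real.exp (-(2 * ℓ) / r))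

lemma expIio {t : ℝ} (ht : 0 ≤ t) :
    expMeasure 1 (Set.Iio t) = ENNReal.ofReal (1 - Real.exp (-t)) := by
  have hsing : expMeasure 1 {t} = 0 :=
    withDensity_absolutelyContinuous (volume : Measure ℝ) (gammaPDF 1 1) (measure_singleton t)
  have hIic : expMeasure 1 (Set.Iic t) = ENNReal.ofReal (1 - Real.exp (-t)) := by
    have h : expMeasure 1 (Set.Iic t) = ∫⁻ y in Set.Iic t, exponentialPDF 1 y := by
      rw [expMeasure, gammaMeasure, withDensity_apply _ measurableSet_Iic]; rfl
    rw [h, lintegral_exponentialPDF_eq_antiDeriv one_pos, if_pos ht, one_mul]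
  rw [← Set.Iio_union_right] at hIic
  have heq : expMeasure 1 (Set.Iio t) = expMeasure 1 (Set.Iio t ∪ {t}) :=
    le_antisymm (measure_mono Set.subset_union_left)
      ((measure_union_le _ _).trans (by rw [hsing, add_zero]))
  rw [heq]; exact hIic

lemma sliceSet (r x u : ℝ) (hr : 0 < r) :
    {e : ℝ | x ∉ Set.Icc (u - r / 2 * e) (u + r / 2 * e)} = Set.Iio (2 / r * |x - u|) := by
  ext e
  simp only [Set.mem_setOf_eq, Set.mem_Icc, not_and_or, not_le, Set.mem_Iio]
  have h2 : 2 / r * |x - u| = |x - u| / (r / 2) := by field_simp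
  rw [h2, lt_div_iff₀ (by positivity), lt_abs]
  constructor
  · rintro (h | h)
    · right; linarith
    · left; linarith
  · rintro (h | h)
    · right; linarith
    · left; linarith


lemma keyIntegral (r ℓ x : ℝ) (hr : 0 < r) (hℓ : 0 < ℓ) (hx0 : 0 ≤ x) (hxℓ : x ≤ ℓ) :
    ∫ u in Set.Icc 0 ℓ, (1 - Real.exp (-(2 / r * |x - u|))) =
      ℓ - r / 2 * (2 - Real.exp (-(2 / r * x)) - Real.exp (-(2 / r * (ℓ - x)))) := by
  have hrne : r ≠ 0 := hr.ne'
  have hcont : Continuous fun u : ℝ => 1 - Real.exp (-(2 / r * |x - u|)) := by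
    have : Continuous fun u : ℝ => |x - u| := (continuous_const.sub continuous_id).abs
    continuity
  rw [MeasureTheory.integral_Icc_eq_integral_Ioc,
    ← intervalIntegral.integral_of_le hℓ.le,
    ← intervalIntegral.integral_add_adjacent_intervals (a := 0) (b := x) (c := ℓ)
      (hcont.intervalIntegrable _ _) (hcont.intervalIntegrable _ _)]
  have hp1 : ∫ u in (0:ℝ)..x, (1 - Real.exp (-(2 / r * |x - u|)))
      = x - r / 2 + r / 2 * Real.exp (-(2 / r * x)) := by
    have hcongr : ∫ u in (0:ℝ)..x, (1 - Real.exp (-(2 / r * |x - u|)))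
        = ∫ u in (0:ℝ)..x, (1 - Real.exp (2 / r * u - 2 / r * x)) := by
      apply intervalIntegral.integral_congr
      intro u hu
      rw [Set.uIcc_of_le hx0] at hu
      show 1 - Real.exp (-(2 / r * |x - u|)) = 1 - Real.exp (2 / r * u - 2 / r * x)
      have h0 : |x - u| = x - u := abs_of_nonneg (by linarith [hu.2])
      have h2 : -(2 / r * (x - u)) = 2 / r * u - 2 / r * x := by ring
      rw [h0, h2]
    rw [hcongr]
    have hF : ∀ u ∈ Set.uIcc (0:ℝ) x, HasDerivAt
        (fun u => u - r / 2 * Real.exp (2 / r * u - 2 / r * x))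
        (1 - Real.exp (2 / r * u - 2 / r * x)) u := by
      intro u _
      have h1 : HasDerivAt (fun u : ℝ => 2 / r * u - 2 / r * x) (2 / r) u := by
        simpa using ((hasDerivAt_id u).const_mul (2 / r)).sub_const (2 / r * x)
      have h3 := (hasDerivAt_id u).sub ((h1.exp).const_mul (r / 2))
      convert h3 using 1
      · rfl
      · rfl
      · rfl
      · have hc : r / 2 * (2 / r) = 1 := by field_simp
        rw [mul_left_comm, hc, mul_one]
    have hInt : IntervalIntegrable (fun u => 1 - Real.exp (2 / r * u - 2 / r * x))
        volume 0 x := by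
      apply Continuous.intervalIntegrable; continuity
    rw [intervalIntegral.integral_eq_sub_of_hasDerivAt hF hInt]
    have e1 : 2 / r * x - 2 / r * x = 0 := by ring
    have e2 : 2 / r * 0 - 2 / r * x = -(2 / r * x) := by ring
    rw [e1, e2, Real.exp_zero]
    ring
  have hp2 : ∫ u in x..ℓ, (1 - Real.exp (-(2 / r * |x - u|)))
      = ℓ - x - r / 2 + r / 2 * Real.exp (-(2 / r * (ℓ - x))) := by
    have hcongr : ∫ u in x..ℓ, (1 - Real.exp (-(2 / r * |x - u|)))
        = ∫ u in x..ℓ, (1 - Real.exp (2 / r * x - 2 / r * u)) := by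
      apply intervalIntegral.integral_congr
      intro u hu
      rw [Set.uIcc_of_le hxℓ] at hu
      show 1 - Real.exp (-(2 / r * |x - u|)) = 1 - Real.exp (2 / r * x - 2 / r * u)
      have h0 : |x - u| = u - x := by
        rw [abs_of_nonpos (by linarith [hu.1])]; ring
      have h2 : -(2 / r * (u - x)) = 2 / r * x - 2 / r * u := by ring
      rw [h0, h2]
    rw [hcongr]
    have hF : ∀ u ∈ Set.uIcc x ℓ, HasDerivAt
        (fun u => u + r / 2 * Real.exp (2 / r * x - 2 / r * u))
        (1 - Real.exp (2 / r * x - 2 / r * u)) u := by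
      intro u _
      have h1 : HasDerivAt (fun u : ℝ => 2 / r * x - 2 / r * u) (-(2 / r)) u := by
        simpa using (((hasDerivAt_id u).const_mul (2 / r)).const_sub (2 / r * x))
      have h3 := (hasDerivAt_id u).add ((h1.exp).const_mul (r / 2))
      convert h3 using 1
      · rfl
      · rfl
      · rfl
      · have hc : r / 2 * (2 / r) = 1 := by field_simp
        rw [mul_neg, mul_neg, mul_left_comm, hc, mul_one, ← sub_eq_add_neg]
    have hInt : IntervalIntegrable (fun u => 1 - Real.exp (2 / r * x - 2 / r * u))
        volume x ℓ := by
      apply Continuous.intervalIntegrable; continuity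
    rw [intervalIntegral.integral_eq_sub_of_hasDerivAt hF hInt]
    have e1 : 2 / r * x - 2 / r * x = 0 := by ring
    have e2 : 2 / r * x - 2 / r * ℓ = -(2 / r * (ℓ - x)) := by ring
    rw [e1, e2, Real.exp_zero]
    ring
  rw [hp1, hp2]
  ring

/-- Fix `ℓ > 0` and `r > 0`. Let `U` be uniform on `[0,ℓ]` and `E` an independent
exponential variable with rate 1; set `I = U − (r/2)E` and `S = U + (r/2)E`. For every
`x ∈ [0,ℓ]`, the probability that `[I,S]` avoids the point `x` lies between `W(ℓ,2r)`
and `W(ℓ,r)`. -/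
theorem stmt_3 {Ω : Type*} [MeasurableSpace Ω] (μ : Measure Ω) [IsProbabilityMeasure μ]
    (ℓ r : ℝ) (hℓ : 0 < ℓ) (hr : 0 < r)
    (U E : Ω → ℝ) (hU : Measurable U) (hE : Measurable E)
    (hUdist : Measure.map U μ = unifMeasure ℓ)
    (hEdist : Measure.map E μ = expMeasure 1)
    (hind : IndepFun U E μ)
    (x : ℝ) (hx : x ∈ Set.Icc 0 ℓ) :
    ENNReal.ofReal (W ℓ (2 * r))
        ≤ μ {ω | x ∉ Set.Icc (U ω - r / 2 * E ω) (U ω + r / 2 * E ω)} ∧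
      μ {ω | x ∉ Set.Icc (U ω - r / 2 * E ω) (U ω + r / 2 * E ω)}
        ≤ ENNReal.ofReal (W ℓ r) := by
  obtain ⟨hx0, hxℓ⟩ := hx
  haveI hPexp : IsProbabilityMeasure (expMeasure 1) := isProbabilityMeasure_expMeasure one_pos
  set f : ℝ → ℝ := fun u => 1 - Real.exp (-(2 / r * |x - u|)) with hf
  set A : ℝ := Real.exp (-(2 / r * x)) with hA
  set B : ℝ := Real.exp (-(2 / r * (ℓ - x))) with hB
  set I : ℝ := ℓ - r / 2 * (2 - A - B) with hI
  set S : Set (ℝ × ℝ) :=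
    {p | x ∉ Set.Icc (p.1 - r / 2 * p.2) (p.1 + r / 2 * p.2)} with hSdef
  have hSm : MeasurableSet S := by
    have h : S = ({p : ℝ × ℝ | p.1 - r / 2 * p.2 ≤ x} ∩ {p | x ≤ p.1 + r / 2 * p.2})ᶜ := by
      ext p; simp [hSdef, Set.mem_Icc]
    rw [h]
    exact ((measurableSet_le (by fun_prop) measurable_const).inter
      (measurableSet_le measurable_const (by fun_prop))).compl
  have hmap : Measure.map (fun ω => (U ω, E ω)) μ = (unifMeasure ℓ).prod (expMeasure 1) := by
    rw [← hUdist, ← hEdist]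
    exact (indepFun_iff_map_prod_eq_prod_map_map hU.aemeasurable hE.aemeasurable).mp hind
  have hcont : Continuous f := by
    have : Continuous fun u : ℝ => |x - u| := (continuous_const.sub continuous_id).abs
    rw [hf]; continuity
  have hkey : ∫ u in Set.Icc 0 ℓ, f u = I := keyIntegral r ℓ x hr hℓ hx0 hxℓ
  have hμeq : μ {ω | x ∉ Set.Icc (U ω - r / 2 * E ω) (U ω + r / 2 * E ω)}
      = ENNReal.ofReal (I / ℓ) := by
    have h1 : μ {ω | x ∉ Set.Icc (U ω - r / 2 * E ω) (U ω + r / 2 * E ω)}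
        = ((unifMeasure ℓ).prod (expMeasure 1)) S := by
      rw [← hmap, Measure.map_apply (hU.prodMk hE) hSm]; rfl
    rw [h1, Measure.prod_apply hSm]
    have hinner : ∀ u : ℝ, expMeasure 1 (Prod.mk u ⁻¹' S) = ENNReal.ofReal (f u) := by
      intro u
      have h2 : Prod.mk u ⁻¹' S
          = {e : ℝ | x ∉ Set.Icc (u - r / 2 * e) (u + r / 2 * e)} := rfl
      rw [h2, sliceSet r x u hr, expIio (by positivity)]
    rw [lintegral_congr hinner]
    simp only [unifMeasure, ProbabilityTheory.cond, lintegral_smul_measure]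
    have hvol : volume (Set.Icc (0:ℝ) ℓ) = ENNReal.ofReal ℓ := by
      rw [Real.volume_Icc, sub_zero]
    have hnn : 0 ≤ᵐ[volume.restrict (Set.Icc (0:ℝ) ℓ)] f := by
      refine ae_of_all _ fun u => ?_
      have h5 : Real.exp (-(2 / r * |x - u|)) ≤ 1 :=
        Real.exp_le_one_iff.mpr (neg_nonpos.mpr (by positivity))
      simp only [hf, Pi.zero_apply]; linarith
    have hlin : ∫⁻ u in Set.Icc (0:ℝ) ℓ, ENNReal.ofReal (f u)
        = ENNReal.ofReal (∫ u in Set.Icc (0:ℝ) ℓ, f u) :=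
      (ofReal_integral_eq_lintegral_ofReal (hcont.integrableOn_Icc) hnn).symm
    rw [hvol, hlin, hkey, ENNReal.ofReal_div_of_pos hℓ, div_eq_mul_inv, mul_comm, smul_eq_mul]
  rw [hμeq]
  have hA1 : A ≤ 1 := Real.exp_le_one_iff.mpr (neg_nonpos.mpr (mul_nonneg (by positivity) hx0))
  have hB1 : B ≤ 1 := Real.exp_le_one_iff.mpr (neg_nonpos.mpr (mul_nonneg (by positivity) (by linarith)))
  have hApos : 0 < A := Real.exp_pos _
  have hBpos : 0 < B := Real.exp_pos _
  constructor
  · -- lower bound : W ℓ (2r) ≤ I/ℓ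
    apply ENNReal.ofReal_le_ofReal
    set p : ℝ := Real.exp (-(x / r)) with hp
    set q : ℝ := Real.exp (-((ℓ - x) / r)) with hq
    have hAp : A = p * p := by rw [hA, hp, ← Real.exp_add]; congr 1; field_simp; ring
    have hBq : B = q * q := by rw [hB, hq, ← Real.exp_add]; congr 1; field_simp; ring
    have hpq : Real.exp (-(2 * ℓ) / (2 * r)) = p * q := by
      rw [hp, hq, ← Real.exp_add]; congr 1; field_simp; ring
    have key_a : 2 * (p * q) ≤ A + B := by
      rw [hAp, hBq]; nlinarith [sq_nonneg (p - q)]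
    rw [W, hpq, le_div_iff₀ hℓ]
    have h4 : 2 * r / (2 * ℓ) * (1 - p * q) * ℓ = r * (1 - p * q) := by
      field_simp
    nlinarith [h4, key_a, mul_nonneg hr.le (by linarith [key_a] : (0:ℝ) ≤ A + B - 2 * (p * q))]
  · -- upper bound : I/ℓ ≤ W ℓ r
    apply ENNReal.ofReal_le_ofReal
    have hAB : A * B = Real.exp (-(2 * ℓ) / r) := by
      rw [hA, hB, ← Real.exp_add]; congr 1; field_simp; ring
    have key_b : A + B ≤ 1 + A * B := by
      nlinarith [mul_nonneg (sub_nonneg.2 hA1) (sub_nonneg.2 hB1)]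
    rw [W, ← hAB, div_le_iff₀ hℓ]
    have h4 : r / (2 * ℓ) * (1 - A * B) * ℓ = r / 2 * (1 - A * B) := by
      field_simp
    nlinarith [h4, key_b, mul_nonneg hr.le (by linarith [key_b] : (0:ℝ) ≤ 1 + A * B - A - B)]
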